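/- Let f_1,…,f_k : ℝⁿ → ℝ be continuously differentiable, x ∈ ℝⁿ, ε ≥ 0, and let v̄ be an element of minimal Euclidean norm in −F_ε(x) := {−w : w ∈ F_ε(x)}. Then either v̄ ≠ 0 and ⟨v̄, ξ⟩ ≤ −‖v̄‖² < 0 for all ξ ∈ F_ε(x), or v̄ = 0 and there is no v ∈ ℝⁿ with ⟨v, ξ⟩ < 0 for all ξ ∈ F_ε(x). -/

import Mathlib

/-- The Goldstein-type set `F_ε(x)` for continuously differentiable objectives:
the convex hull of all gradients of all objectives over the closed `ε`-ball around `x`. -/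
noncomputable def Feps {n k : ℕ} (f : Fin k → EuclideanSpace ℝ (Fin n) → ℝ)
    (x : EuclideanSpace ℝ (Fin n)) (ε : ℝ) : Set (EuclideanSpace ℝ (Fin n)) :=
  convexHull ℝ (⋃ i, (fun y => gradient (f i) y) '' Metric.closedBall x ε)

/-- the minimal-norm element `v̄` of `-F_ε(x)` is either nonzero with
`⟨v̄, ξ⟩ ≤ -‖v̄‖² < 0` for all `ξ ∈ F_ε(x)`, or zero and no common descent direction
for `F_ε(x)` exists. -/
theorem min_norm_Feps_descent {n k : ℕ}
    (f : Fin k → EuclideanSpace ℝ (Fin n) → ℝ) (hf : ∀ i, ContDiff ℝ 1 (f i))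
    (x : EuclideanSpace ℝ (Fin n)) (ε : ℝ) (hε : 0 ≤ ε)
    (vbar : EuclideanSpace ℝ (Fin n)) (hvmem : vbar ∈ -(Feps f x ε))
    (hvmin : ∀ w ∈ -(Feps f x ε), ‖vbar‖ ≤ ‖w‖) :
    (vbar ≠ 0 ∧ (∀ ξ ∈ Feps f x ε, (inner ℝ vbar ξ : ℝ) ≤ -‖vbar‖ ^ 2) ∧ -‖vbar‖ ^ 2 < (0 : ℝ)) ∨
    (vbar = 0 ∧ ¬ ∃ v : EuclideanSpace ℝ (Fin n), ∀ ξ ∈ Feps f x ε, (inner ℝ v ξ : ℝ) < 0) := by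
  set K : Set (EuclideanSpace ℝ (Fin n)) := -(Feps f x ε) with hK
  have hKconv : Convex ℝ K := (convex_convexHull ℝ _).neg
  by_cases hv0 : vbar = 0
  · right
    refine ⟨hv0, ?_⟩
    rintro ⟨v, hv⟩
    have h0 : (0 : EuclideanSpace ℝ (Fin n)) ∈ Feps f x ε := by
      have := hvmem
      rw [hv0] at this
      simpa [hK, Set.mem_neg] using this
    have := hv 0 h0
    simp at this
  · left
    have hinf : ‖(0 : EuclideanSpace ℝ (Fin n)) - vbar‖ = ⨅ w : K, ‖(0 : EuclideanSpace ℝ (Fin n)) - w‖ := by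
      have hne : Nonempty K := ⟨⟨vbar, hvmem⟩⟩
      refine le_antisymm ?_ ?_
      · refine le_ciInf fun w => ?_
        simpa using hvmin w w.2
      · have := ciInf_le (f := fun w : K => ‖(0 : EuclideanSpace ℝ (Fin n)) - w‖)
          ⟨0, fun _ ⟨_, h⟩ => h ▸ norm_nonneg _⟩ ⟨vbar, hvmem⟩
        simpa using this
    have hchar := (norm_eq_iInf_iff_real_inner_le_zero hKconv hvmem).1 hinf
    refine ⟨hv0, ?_, ?_⟩
    · intro ξ hξ
      have hw : -ξ ∈ K := by simpa [hK, Set.mem_neg] using hξ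
      have := hchar (-ξ) hw
      have h2 : inner ℝ (-vbar) (-ξ - vbar) ≤ (0 : ℝ) := by simpa using this
      rw [inner_sub_right, inner_neg_neg, inner_neg_left] at h2
      have hn : (inner ℝ vbar vbar : ℝ) = ‖vbar‖ ^ 2 := real_inner_self_eq_norm_sq vbar
      linarith
    · have : 0 < ‖vbar‖ := norm_pos_iff.2 hv0
      nlinarith
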